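/- Let H be an n×n Hermitian complex matrix and ρ₀ an n×n complex matrix, and define ρ(t) = exp(-itH)·ρ₀·exp(itH). Then ρ is almost periodic: for every ε > 0 there exists L > 0 such that for every a ∈ ℝ there exists T with a ≤ T ≤ a + L and ‖ρ(t+T) - ρ(t)‖ < ε for all t ∈ ℝ, where ‖·‖ is the Frobenius norm. In particular the inequality ‖ρ(t+T) - ρ(t)‖ < ε for all t is satisfied by infinitely many values of T, spread over the whole range -∞ to ∞ so as not to leave arbitrarily long empty intervals. -/

import Mathlib

open Matrix

/-- The Frobenius norm `‖X‖ = (tr(Xᴴ·X))^{1/2}` of a complex matrix. -/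
noncomputable def frobeniusNorm {n : ℕ} (X : Matrix (Fin n) (Fin n) ℂ) : ℝ :=
  Real.sqrt (Xᴴ * X).trace.re

/-- The evolution `ρ(t) = exp(-itH)·ρ₀·exp(itH)`. -/
noncomputable def rhoEvol {n : ℕ} (H ρ₀ : Matrix (Fin n) (Fin n) ℂ) (t : ℝ) :
    Matrix (Fin n) (Fin n) ℂ :=
  NormedSpace.exp ((-(t : ℂ) * Complex.I) • H) * ρ₀ *
    NormedSpace.exp (((t : ℂ) * Complex.I) • H)

attribute [local instance] Matrix.frobeniusNormedAddCommGroup Matrix.frobeniusNormedRing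
  Matrix.frobeniusNormedAlgebra

namespace RhoAux

variable {n : ℕ}

/-- The unitary propagator. -/
noncomputable def U (H : Matrix (Fin n) (Fin n) ℂ) (t : ℝ) : Matrix (Fin n) (Fin n) ℂ :=
  NormedSpace.exp ((-(t : ℂ) * Complex.I) • H)

lemma U_add (H : Matrix (Fin n) (Fin n) ℂ) (s t : ℝ) : U H (s + t) = U H s * U H t := by
  rw [U, U, U, ← Matrix.exp_add_of_commute]
  · congr 1
    rw [← add_smul]
    congr 1
    push_cast
    ring
  · exact ((Commute.refl H).smul_left _).smul_right _

lemma U_zero (H : Matrix (Fin n) (Fin n) ℂ) : U H 0 = 1 := by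
  have h : ((-((0 : ℝ) : ℂ)) * Complex.I) • H = 0 := by norm_num
  rw [U, h, NormedSpace.exp_zero]

lemma U_mul_U_neg (H : Matrix (Fin n) (Fin n) ℂ) (t : ℝ) : U H t * U H (-t) = 1 := by
  rw [← U_add, add_neg_cancel, U_zero]

lemma U_neg_mul_U (H : Matrix (Fin n) (Fin n) ℂ) (t : ℝ) : U H (-t) * U H t = 1 := by
  rw [← U_add, neg_add_cancel, U_zero]

lemma U_conjTranspose {H : Matrix (Fin n) (Fin n) ℂ} (hH : H.IsHermitian) (t : ℝ) :
    (U H t)ᴴ = U H (-t) := by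
  rw [U, U, ← Matrix.exp_conjTranspose]
  congr 1
  rw [conjTranspose_smul, hH.eq]
  congr 1
  simp only [star_mul', star_neg, Complex.star_def, Complex.conj_I, Complex.conj_ofReal]
  push_cast
  ring

lemma rho_eq (H ρ₀ : Matrix (Fin n) (Fin n) ℂ) (t : ℝ) :
    rhoEvol H ρ₀ t = U H t * ρ₀ * U H (-t) := by
  have h : ((t : ℂ) * Complex.I) • H = (-(((-t : ℝ)) : ℂ) * Complex.I) • H := by
    push_cast; ring_nf
  rw [rhoEvol, U, U, h]

lemma norm_eq_sqrt (X : Matrix (Fin n) (Fin n) ℂ) :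
    ‖X‖ = Real.sqrt ((Xᴴ * X).trace.re) := by
  rw [Matrix.frobenius_norm_def, ← Real.sqrt_eq_rpow]
  congr 1
  rw [Matrix.trace]
  simp only [Matrix.diag_apply, Matrix.mul_apply, Matrix.conjTranspose_apply]
  rw [Complex.re_sum, Finset.sum_comm]
  refine Finset.sum_congr rfl fun i _ => ?_
  rw [Complex.re_sum]
  refine Finset.sum_congr rfl fun j _ => ?_
  rw [mul_comm, Complex.star_def, Complex.mul_conj]
  simp [Complex.normSq_eq_norm_sq, ← Complex.ofReal_pow]

lemma frob_eq (X : Matrix (Fin n) (Fin n) ℂ) : frobeniusNorm X = ‖X‖ := by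
  rw [norm_eq_sqrt, frobeniusNorm]

lemma norm_U {H : Matrix (Fin n) (Fin n) ℂ} (hH : H.IsHermitian) (t : ℝ) :
    ‖U H t‖ = Real.sqrt n := by
  rw [norm_eq_sqrt, U_conjTranspose hH, U_neg_mul_U]
  simp [Matrix.trace_one]

lemma norm_conj {H : Matrix (Fin n) (Fin n) ℂ} (hH : H.IsHermitian) (t : ℝ)
    (X : Matrix (Fin n) (Fin n) ℂ) : ‖U H t * X * U H (-t)‖ = ‖X‖ := by
  rw [norm_eq_sqrt, norm_eq_sqrt X]
  congr 2
  have h1 : (U H t * X * U H (-t))ᴴ = U H t * Xᴴ * U H (-t) := by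
    rw [conjTranspose_mul, conjTranspose_mul, U_conjTranspose hH, U_conjTranspose hH, neg_neg,
      mul_assoc]
  rw [h1]
  have h2 : U H t * Xᴴ * U H (-t) * (U H t * X * U H (-t)) = U H t * (Xᴴ * X) * U H (-t) := by
    simp only [mul_assoc]
    rw [← mul_assoc (U H (-t)) (U H t), U_neg_mul_U, one_mul]
  rw [h2, Matrix.trace_mul_cycle, ← mul_assoc, U_neg_mul_U, one_mul]

end RhoAux

open RhoAux

theorem rhoEvol_almost_periodic {n : ℕ} (H ρ₀ : Matrix (Fin n) (Fin n) ℂ)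
    (hH : H.IsHermitian) :
    ∀ ε > (0 : ℝ), ∃ L > (0 : ℝ), ∀ a : ℝ, ∃ T : ℝ, a ≤ T ∧ T ≤ a + L ∧
      ∀ t : ℝ, frobeniusNorm (rhoEvol H ρ₀ (t + T) - rhoEvol H ρ₀ t) < ε := by
  intro ε hε
  set s : ℝ := Real.sqrt n with hs
  have hs0 : 0 ≤ s := Real.sqrt_nonneg _
  set K : ℝ := s * ‖ρ₀‖ * (s + 1) with hKdef
  have hK : 0 ≤ K := by positivity
  set δ : ℝ := ε / (K + 1) with hδdef
  have hδ : 0 < δ := div_pos hε (by linarith)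
  -- totally bounded range
  have hTB : TotallyBounded (Set.range (U H)) := by
    refine TotallyBounded.subset ?_ (isCompact_closedBall (0 : Matrix (Fin n) (Fin n) ℂ)
      s).totallyBounded
    rintro x ⟨t, rfl⟩
    simpa [mem_closedBall_zero_iff] using le_of_eq (norm_U hH t)
  rw [totallyBounded_iff_subset] at hTB
  obtain ⟨t, hts, htf, hcover⟩ := hTB _ (Metric.dist_mem_uniformity hδ)
  -- choice of preimages
  have hchoice : ∀ y ∈ t, ∃ r : ℝ, U H r = y := by
    intro y hy
    obtain ⟨r, hr⟩ := hts hy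
    exact ⟨r, hr⟩
  classical
  set g : Matrix (Fin n) (Fin n) ℂ → ℝ :=
    fun y => if h : ∃ r : ℝ, U H r = y then h.choose else 0 with hgdef
  have hg : ∀ y ∈ t, U H (g y) = y := by
    intro y hy
    obtain ⟨r, hr⟩ := hchoice y hy
    rw [hgdef]
    simp only
    rw [dif_pos ⟨r, hr⟩]
    exact (⟨r, hr⟩ : ∃ r : ℝ, U H r = y).choose_spec
  -- uniform bound on the preimages
  obtain ⟨M, hM⟩ := (htf.image fun y => |g y|).bddAbove
  have hM' : ∀ y ∈ t, |g y| ≤ max M 0 :=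
    fun y hy => le_trans (hM (Set.mem_image_of_mem _ hy)) (le_max_left _ _)
  set M' : ℝ := max M 0 with hM'def
  have hM'0 : 0 ≤ M' := le_max_right _ _
  refine ⟨2 * M' + 1, by linarith, fun a => ?_⟩
  -- find an almost period in [a, a + 2M' + 1]
  set σ : ℝ := a + M' with hσdef
  have hmem : U H (-σ) ∈ ⋃ y ∈ t, {x | (x, y) ∈ {p : _ × _ | dist p.1 p.2 < δ}} :=
    hcover ⟨-σ, rfl⟩
  simp only [Set.mem_iUnion, Set.mem_setOf_eq, exists_prop] at hmem
  obtain ⟨y, hy, hdist⟩ := hmem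
  set r : ℝ := g y with hrdef
  have hUr : U H r = y := hg y hy
  have hrM : |r| ≤ M' := hM' y hy
  have habs := abs_le.mp hrM
  refine ⟨σ + r, by simp only [hσdef]; linarith [habs.1], by simp only [hσdef]; linarith [habs.2],
    fun t' => ?_⟩
  set T : ℝ := σ + r with hTdef
  -- ‖U T - 1‖ ≤ δ * s
  have hUT : ‖U H T - 1‖ ≤ δ * s := by
    have h1 : U H T - 1 = (U H r - U H (-σ)) * U H σ := by
      rw [sub_mul, ← U_add, ← U_add, neg_add_cancel, U_zero, add_comm r σ]
    rw [h1]
    calc ‖(U H r - U H (-σ)) * U H σ‖ ≤ ‖U H r - U H (-σ)‖ * ‖U H σ‖ := norm_mul_le _ _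
      _ ≤ δ * s := by
          rw [norm_U hH]
          have : ‖U H r - U H (-σ)‖ < δ := by
            rw [← dist_eq_norm, hUr]
            rw [dist_comm] at hdist
            exact hdist
          exact mul_le_mul this.le le_rfl hs0 hδ.le
  -- ‖ρ(T) - ρ₀‖ ≤ δ * K
  have hUnegT : ‖U H (-T) - 1‖ ≤ δ * s := by
    have : U H (-T) - 1 = (U H T - 1)ᴴ := by
      rw [conjTranspose_sub, U_conjTranspose hH, conjTranspose_one]
    rw [this, Matrix.frobenius_norm_conjTranspose]
    exact hUT
  have hρT : ‖U H T * ρ₀ * U H (-T) - ρ₀‖ ≤ δ * K := by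
    have hsplit : U H T * ρ₀ * U H (-T) - ρ₀ =
        (U H T - 1) * (ρ₀ * U H (-T)) + ρ₀ * (U H (-T) - 1) := by
      noncomm_ring
    rw [hsplit]
    have h1 : ‖(U H T - 1) * (ρ₀ * U H (-T))‖ ≤ (δ * s) * (‖ρ₀‖ * s) := by
      calc ‖(U H T - 1) * (ρ₀ * U H (-T))‖ ≤ ‖U H T - 1‖ * ‖ρ₀ * U H (-T)‖ := norm_mul_le _ _
        _ ≤ (δ * s) * (‖ρ₀‖ * s) := by
            refine mul_le_mul hUT ?_ (norm_nonneg _) (by positivity)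
            calc ‖ρ₀ * U H (-T)‖ ≤ ‖ρ₀‖ * ‖U H (-T)‖ := norm_mul_le _ _
              _ = ‖ρ₀‖ * s := by rw [norm_U hH]
    have h2 : ‖ρ₀ * (U H (-T) - 1)‖ ≤ ‖ρ₀‖ * (δ * s) := by
      calc ‖ρ₀ * (U H (-T) - 1)‖ ≤ ‖ρ₀‖ * ‖U H (-T) - 1‖ := norm_mul_le _ _
        _ ≤ ‖ρ₀‖ * (δ * s) := mul_le_mul_of_nonneg_left hUnegT (norm_nonneg _)
    calc ‖(U H T - 1) * (ρ₀ * U H (-T)) + ρ₀ * (U H (-T) - 1)‖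
        ≤ ‖(U H T - 1) * (ρ₀ * U H (-T))‖ + ‖ρ₀ * (U H (-T) - 1)‖ := norm_add_le _ _
      _ ≤ (δ * s) * (‖ρ₀‖ * s) + ‖ρ₀‖ * (δ * s) := add_le_add h1 h2
      _ = δ * K := by rw [hKdef]; ring
  -- conclude
  have hdiff : rhoEvol H ρ₀ (t' + T) - rhoEvol H ρ₀ t' =
      U H t' * (U H T * ρ₀ * U H (-T) - ρ₀) * U H (-t') := by
    rw [rho_eq, rho_eq]
    have e1 : U H (t' + T) = U H t' * U H T := U_add H t' T
    have e2 : U H (-(t' + T)) = U H (-T) * U H (-t') := by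
      rw [← U_add]; ring_nf
    rw [e1, e2]
    noncomm_ring
  rw [frob_eq, hdiff, norm_conj hH]
  calc ‖U H T * ρ₀ * U H (-T) - ρ₀‖ ≤ δ * K := hρT
    _ < δ * (K + 1) := by nlinarith
    _ = ε := by rw [hδdef]; field_simp
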